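/- Let b ≥ 2 and a ≥ 1 be integers, let t ≥ 0 be an integer, and let d₁ and d₂ be distinct odd squarefree positive integers whose Möbius function values agree, μ(d₁) = μ(d₂). Then the values of the cyclotomic polynomials Φ_{2^t · d₁}(a) and Φ_{2^t · d₂}(a) are coprime, i.e., gcd(Φ_{2^t d₁}(a), Φ_{2^t d₂}(a)) = 1. -/

import Mathlib

open Polynomial Nat

lemma root_aux (p : ℕ) [Fact p.Prime] (n : ℕ) (hn : 0 < n) {x : ZMod p}
    (hx : ((cyclotomic n (ZMod p)).IsRoot x)) :
    IsPrimitiveRoot x (ordCompl[p] n) := by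
  have hpc : ¬ p ∣ ordCompl[p] n := Nat.not_dvd_ordCompl (Fact.out) hn.ne'
  have : NeZero (((ordCompl[p] n : ℕ) : ZMod p)) :=
    ⟨by rw [Ne, ZMod.natCast_eq_zero_iff]; exact hpc⟩
  rw [← Nat.ordProj_mul_ordCompl_eq_self n p] at hx
  exact (isRoot_cyclotomic_prime_pow_mul_iff_of_charP).mp hx

lemma mu_aux {p c : ℕ} (hp : p.Prime) (hpc : ¬ p ∣ c) (hc : Squarefree c) :
    ArithmeticFunction.moebius (p * c) ≠ ArithmeticFunction.moebius c := by
  have hcop : Nat.Coprime p c := (hp.coprime_iff_not_dvd).mpr hpc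
  rw [ArithmeticFunction.isMultiplicative_moebius.map_mul_of_coprime hcop,
    ArithmeticFunction.moebius_apply_prime hp]
  have : ArithmeticFunction.moebius c ≠ 0 :=
    ArithmeticFunction.moebius_ne_zero_iff_squarefree.mpr hc
  omega

/-- Let `b ≥ 2` and `a ≥ 1` be integers, `t ≥ 0`, and let `d₁ ≠ d₂` be odd squarefree
positive integers with `μ(d₁) = μ(d₂)`. Then `Φ_{2^t d₁}(a)` and `Φ_{2^t d₂}(a)`
are coprime. -/
theorem cyclotomic_values_coprime (b a : ℤ) (hb : 2 ≤ b) (ha : 1 ≤ a) (t : ℕ)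
    (d₁ d₂ : ℕ) (hd₁ : 0 < d₁) (hd₂ : 0 < d₂) (hne : d₁ ≠ d₂)
    (hodd₁ : Odd d₁) (hodd₂ : Odd d₂)
    (hsf₁ : Squarefree d₁) (hsf₂ : Squarefree d₂)
    (hμ : ArithmeticFunction.moebius d₁ = ArithmeticFunction.moebius d₂) :
    Int.gcd ((Polynomial.cyclotomic (2 ^ t * d₁) ℤ).eval a)
      ((Polynomial.cyclotomic (2 ^ t * d₂) ℤ).eval a) = 1 := by
  by_contra h
  obtain ⟨p, hp, hpd⟩ := Nat.exists_prime_and_dvd h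
  haveI : Fact p.Prime := ⟨hp⟩
  have key : ∀ d : ℕ, 0 < d →
      (p : ℤ) ∣ (cyclotomic (2 ^ t * d) ℤ).eval a →
      IsPrimitiveRoot ((a : ℤ) : ZMod p) (ordCompl[p] (2 ^ t * d)) := by
    intro d hd hdvd
    have h0 : (((cyclotomic (2 ^ t * d) ℤ).eval a : ℤ) : ZMod p) = 0 :=
      (ZMod.intCast_zmod_eq_zero_iff_dvd _ p).mpr hdvd
    have hroot : (cyclotomic (2 ^ t * d) (ZMod p)).IsRoot ((a : ℤ) : ZMod p) := by
      rw [IsRoot.def, ← map_cyclotomic_int (2 ^ t * d) (ZMod p), eval_map]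
      exact (eval₂_at_apply (Int.castRingHom (ZMod p)) a).trans h0
    exact root_aux p _ (by positivity) hroot
  have h1 := key d₁ hd₁ ((Int.natCast_dvd_natCast.mpr hpd).trans (Int.gcd_dvd_left _ _))
  have h2 := key d₂ hd₂ ((Int.natCast_dvd_natCast.mpr hpd).trans (Int.gcd_dvd_right _ _))
  have heq : ordCompl[p] (2 ^ t * d₁) = ordCompl[p] (2 ^ t * d₂) := by
    rw [h1.eq_orderOf, ← h2.eq_orderOf]
  rw [Nat.ordCompl_mul, Nat.ordCompl_mul] at heq
  have hcq : ordCompl[p] d₁ = ordCompl[p] d₂ :=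
    Nat.eq_of_mul_eq_mul_left (Nat.ordCompl_pos p (by positivity)) heq
  obtain ⟨c, hcdef⟩ : ∃ c, ordCompl[p] d₂ = c := ⟨_, rfl⟩
  have hpc : ¬ p ∣ c := hcdef ▸ Nat.not_dvd_ordCompl hp hd₂.ne'
  have hcsf : Squarefree c :=
    hcdef ▸ hsf₂.squarefree_of_dvd (Nat.ordCompl_dvd d₂ p)
  obtain ⟨k₁, hk1⟩ : ∃ k, d₁.factorization p = k := ⟨_, rfl⟩
  obtain ⟨k₂, hk2⟩ : ∃ k, d₂.factorization p = k := ⟨_, rfl⟩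
  have e1 : d₁ = p ^ k₁ * c := by
    conv_lhs => rw [← Nat.ordProj_mul_ordCompl_eq_self d₁ p]
    rw [hcq, hcdef, hk1]
  have e2 : d₂ = p ^ k₂ * c := by
    conv_lhs => rw [← Nat.ordProj_mul_ordCompl_eq_self d₂ p]
    rw [hcdef, hk2]
  have k1 : k₁ ≤ 1 := hk1 ▸ hsf₁.natFactorization_le_one p
  have k2 : k₂ ≤ 1 := hk2 ▸ hsf₂.natFactorization_le_one p
  rcases Nat.le_one_iff_eq_zero_or_eq_one.mp k1 with f1 | f1 <;>
    rcases Nat.le_one_iff_eq_zero_or_eq_one.mp k2 with f2 | f2 <;>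
    rw [f1] at e1 <;> rw [f2] at e2 <;>
    simp only [pow_zero, pow_one, one_mul] at e1 e2
  · exact hne (e1.trans e2.symm)
  · rw [e1, e2] at hμ; exact mu_aux hp hpc hcsf hμ.symm
  · rw [e1, e2] at hμ; exact mu_aux hp hpc hcsf hμ
  · exact hne (e1.trans e2.symm)
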